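/- Let k ≥ 1, m ≥ 1, len = k + m, a = ⌊len/m⌋, b = len mod m, and let P be the rack placement of the stripe given by the D³ grouping (viewing each group as one rack). Then the total repair cost satisfies Σ_{B=0}^{len−1} c_P(B) = (a−1)(k+1) + a(m−1) if b = m − 1, and Σ_{B=0}^{len−1} c_P(B) = (a−1)(k+m) otherwise. Equivalently, the average number of cross-rack accessed blocks for recovering one failed block under the D³ layout equals μ = ((a−1)(k+1) + a(m−1))/(k+m) if b = m − 1 and μ = a − 1 otherwise. -/

import Mathlib

/-- Ceiling division of naturals: `⌈a / b⌉ = (a + b - 1) / b`. -/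
def cdiv (a b : ℕ) : ℕ := (a + b - 1) / b

/-- `N_g = ⌈len / m⌉`, the number of groups of the D³ grouping. -/
def Ng (len m : ℕ) : ℕ := cdiv len m

/-- `Size_max = ⌈len / N_g⌉`. -/
def sizeMax (len m : ℕ) : ℕ := cdiv len (Ng len m)

/-- `Size_min = ⌊len / N_g⌋`. -/
def sizeMin (len m : ℕ) : ℕ := len / Ng len m

/-- `t = len mod N_g`, the number of groups of size `Size_max`. -/
def tG (len m : ℕ) : ℕ := len % Ng len m

/-- The size of the `j`-th group of the D³ grouping: the first `t` groups have
`Size_max` blocks, the remaining `N_g - t` groups have `Size_min` blocks. -/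
def groupSize (len m j : ℕ) : ℕ :=
  if j < tG len m then sizeMax len m else sizeMin len m

/-- The index of the group of the D³ grouping containing block `x`
(the groups are consecutive runs of block indices). -/
def groupOf (len m x : ℕ) : ℕ :=
  if x < tG len m * sizeMax len m then x / sizeMax len m
  else tG len m + (x - tG len m * sizeMax len m) / sizeMin len m

/-- The position of block `x` within its group under the D³ grouping. -/
def offsetOf (len m x : ℕ) : ℕ :=
  if x < tG len m * sizeMax len m then x % sizeMax len m
  else (x - tG len m * sizeMax len m) % sizeMin len m

/-- The cross-rack cost of a repair choice: a rack placement `P` of the stripe's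
blocks, a set `S` of helper blocks and a target rack `T` incur one cross-rack
aggregated block for each rack other than `T` that intersects `S`. -/
def crossCost (len : ℕ) (P : Fin len → ℕ) (S : Finset (Fin len)) (T : ℕ) : ℕ :=
  ((S.filter (fun x => P x ≠ T)).image P).card

/-- The repair cost `c_P(B)` of a failed block `B` under rack placement `P`:
the minimum cross-rack cost over all repair choices, i.e. over all sets `S` of
`k` helper blocks with `B ∉ S` together with a target rack `T` that holds at
most `m - 1` blocks other than `B` (a part of `P` with `|T \ {B}| ≤ m - 1`,
or a new empty rack). -/
noncomputable def repairCost (len k m : ℕ) (P : Fin len → ℕ) (B : Fin len) : ℕ :=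
  sInf {c : ℕ | ∃ (S : Finset (Fin len)) (T : ℕ),
    S.card = k ∧ B ∉ S ∧
    (Finset.univ.filter (fun x => P x = T ∧ x ≠ B)).card ≤ m - 1 ∧
    c = crossCost len P S T}

namespace D3

lemma cdiv_ge {a b : ℕ} (hb : 0 < b) : a ≤ cdiv a b * b := by
  obtain ⟨d, rfl⟩ : ∃ d, b = d + 1 := ⟨b - 1, by omega⟩
  unfold cdiv
  rw [show a + (d + 1) - 1 = a + d by omega]
  have h1 := Nat.div_add_mod (a + d) (d + 1)
  have h2 : (a + d) % (d + 1) < d + 1 := Nat.mod_lt _ (by omega)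
  nlinarith [h1, h2]

lemma cdiv_lt {a b : ℕ} (hb : 0 < b) : cdiv a b * b < a + b := by
  obtain ⟨d, rfl⟩ : ∃ d, b = d + 1 := ⟨b - 1, by omega⟩
  unfold cdiv
  rw [show a + (d + 1) - 1 = a + d by omega]
  exact lt_of_le_of_lt (Nat.div_mul_le_self _ _) (by omega)

lemma cdiv_pos {a b : ℕ} (ha : 0 < a) (hb : 0 < b) : 0 < cdiv a b := by
  rcases Nat.eq_zero_or_pos (cdiv a b) with h | h
  · have := cdiv_ge (a := a) hb
    rw [h] at this; simp at this; omega
  · exact h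

lemma cdiv_le_self {a b : ℕ} (hb : 0 < b) : cdiv a b ≤ a := by
  obtain ⟨d, rfl⟩ : ∃ d, b = d + 1 := ⟨b - 1, by omega⟩
  unfold cdiv
  rw [show a + (d + 1) - 1 = a + d by omega]
  have : (a + d) / (d + 1) < a + 1 := by
    rw [Nat.div_lt_iff_lt_mul (by omega)]
    nlinarith
  omega

variable {len m : ℕ}

lemma Ng_pos (hm : 0 < m) (hlen : 0 < len) : 0 < Ng len m := cdiv_pos hlen hm

lemma key (len m : ℕ) : Ng len m * sizeMin len m + tG len m = len :=
  Nat.div_add_mod len (Ng len m)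

lemma tG_lt (hm : 0 < m) (hlen : 0 < len) : tG len m < Ng len m :=
  Nat.mod_lt _ (Ng_pos hm hlen)

lemma Ng_mul_ge (hm : 0 < m) : len ≤ Ng len m * m := cdiv_ge hm

lemma sizeMin_pos (hm : 0 < m) (hlen : 0 < len) : 0 < sizeMin len m := by
  have h1 : Ng len m ≤ len := cdiv_le_self hm
  have h2 := Ng_pos hm hlen
  exact Nat.one_le_div_iff h2 |>.mpr h1

lemma sizeMin_le (hm : 0 < m) (hlen : 0 < len) : sizeMin len m ≤ m := by
  have h1 := key len m
  have h2 := Ng_mul_ge (len := len) hm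
  have h3 := Ng_pos hm hlen
  have : Ng len m * sizeMin len m ≤ Ng len m * m := by omega
  exact Nat.le_of_mul_le_mul_left this h3

lemma sizeMin_lt (hm : 0 < m) (hlen : 0 < len) (ht : tG len m ≠ 0) :
    sizeMin len m < m := by
  have h1 := key len m
  have h2 := Ng_mul_ge (len := len) hm
  have h3 := Ng_pos hm hlen
  have : Ng len m * sizeMin len m < Ng len m * m := by omega
  exact Nat.lt_of_mul_lt_mul_left this

lemma sizeMax_eq (hm : 0 < m) (hlen : 0 < len) (ht : tG len m ≠ 0) :
    sizeMax len m = sizeMin len m + 1 := by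
  have h1 := key len m
  have h2 := tG_lt (len := len) hm hlen
  have h3 := Ng_pos (len := len) hm hlen
  show cdiv len (Ng len m) = _
  obtain ⟨d, hd⟩ : ∃ d, Ng len m = d + 1 := ⟨Ng len m - 1, by omega⟩
  unfold cdiv
  rw [show len + Ng len m - 1 = len + (Ng len m - 1) by omega]
  have ht1 : 1 ≤ tG len m := Nat.one_le_iff_ne_zero.mpr ht
  apply Nat.div_eq_of_lt_le
  · rw [hd] at h1 h2 ⊢
    have e1 : (sizeMin len m + 1) * (d + 1) = (d + 1) * sizeMin len m + (d + 1) := by ring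
    rw [show d + 1 - 1 = d from rfl]
    linarith [e1, h1, ht1]
  · rw [hd] at h1 h2 ⊢
    have e1 : (sizeMin len m + 1 + 1) * (d + 1) = (d + 1) * sizeMin len m + 2 * (d + 1) := by ring
    rw [show d + 1 - 1 = d from rfl]
    linarith [e1, h1, h2]

lemma sizeMax_le (hm : 0 < m) (hlen : 0 < len) : sizeMax len m ≤ m := by
  rcases Nat.eq_zero_or_pos (tG len m) with ht | ht
  · show cdiv len (Ng len m) ≤ m
    have h1 := key len m
    rw [ht] at h1; simp at h1
    have hN := Ng_pos (len := len) hm hlen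
    have h4 := cdiv_lt (a := len) (b := Ng len m) hN
    have h5 : cdiv len (Ng len m) * Ng len m < (sizeMin len m + 1) * Ng len m := by
      have e1 : (sizeMin len m + 1) * Ng len m = Ng len m * sizeMin len m + Ng len m := by ring
      linarith [h4, h1, e1]
    have h6 : cdiv len (Ng len m) < sizeMin len m + 1 := Nat.lt_of_mul_lt_mul_right h5
    have := sizeMin_le (len := len) hm hlen
    omega
  · rw [sizeMax_eq hm hlen (by omega)]
    exact sizeMin_lt hm hlen (by omega)

lemma groupSize_le (hm : 0 < m) (hlen : 0 < len) (j : ℕ) : groupSize len m j ≤ m := by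
  unfold groupSize
  split
  · exact sizeMax_le hm hlen
  · exact sizeMin_le hm hlen

end D3

namespace D3X
open D3
variable {len m : ℕ}

lemma Ng_one (hlen : 0 < len) : Ng len 1 = len := by
  unfold Ng cdiv; simp

lemma tG_one (hlen : 0 < len) : tG len 1 = 0 := by
  unfold tG; rw [Ng_one hlen]; exact Nat.mod_self len

lemma one_min (hm : 0 < m) (hlen : m < len) (ht : 1 ≤ tG len m) :
    m ≤ 2 * sizeMin len m := by
  rcases Nat.lt_or_ge m 2 with hm2 | hm2
  · interval_cases m
    · rw [tG_one (by omega)] at ht; omega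
  by_contra hc
  push_neg at hc
  obtain ⟨m2, rfl⟩ : ∃ m2, m = m2 + 2 := ⟨m - 2, by omega⟩
  have hlen0 : 0 < len := by omega
  have h1 := key len (m2 + 2)
  have h2 := tG_lt (len := len) (m := m2 + 2) (by omega) hlen0
  have h3 := cdiv_lt (a := len) (b := m2 + 2) (by omega)
  have h3' : Ng len (m2 + 2) * (m2 + 2) < len + (m2 + 2) := h3
  set N := Ng len (m2 + 2) with hN
  set Mn := sizeMin len (m2 + 2) with hMn
  set t := tG len (m2 + 2) with ht'
  -- hc : 2 * Mn < m2 + 2, so 2 * Mn ≤ m2 + 1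
  have f1 : N * (2 * Mn) ≤ N * (m2 + 1) := Nat.mul_le_mul_left N (by omega)
  have e1 : N * (2 * Mn) = 2 * (N * Mn) := by ring
  have e2 : N * (m2 + 2) = N * m2 + 2 * N := by ring
  have e3 : N * (m2 + 1) = N * m2 + N := by ring
  have h5 : len + 1 ≤ m2 + N := by linarith
  have f4 : (m2 + 2) * len < (m2 + 2) * (m2 + N) :=
    Nat.mul_lt_mul_of_pos_left (by omega) (by omega)
  have f3 : (m2 + 2) * (m2 + 1) ≤ len * (m2 + 1) :=
    Nat.mul_le_mul_right _ (by omega)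
  nlinarith [f4, f3, h3']

lemma two_min (hm : 0 < m) (hlen : m < len) (ht : tG len m + 2 ≤ Ng len m) :
    m + 1 ≤ 2 * sizeMin len m := by
  rcases Nat.lt_or_ge m 2 with hm2 | hm2
  · have := sizeMin_pos (len := len) hm (by omega)
    omega
  by_contra hc
  push_neg at hc
  obtain ⟨m2, rfl⟩ : ∃ m2, m = m2 + 2 := ⟨m - 2, by omega⟩
  have hlen0 : 0 < len := by omega
  have h1 := key len (m2 + 2)
  have h3' : Ng len (m2 + 2) * (m2 + 2) < len + (m2 + 2) :=
    cdiv_lt (a := len) (b := m2 + 2) (by omega)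
  set N := Ng len (m2 + 2) with hN
  set Mn := sizeMin len (m2 + 2) with hMn
  set t := tG len (m2 + 2) with ht'
  have f1 : N * (2 * Mn) ≤ N * (m2 + 2) := Nat.mul_le_mul_left N (by omega)
  have e1 : N * (2 * Mn) = 2 * (N * Mn) := by ring
  have e2 : N * (m2 + 2) = N * m2 + 2 * N := by ring
  have h5 : len + 3 ≤ m2 + 2 * N := by linarith
  have f4 : (m2 + 2) * (len + 3) ≤ (m2 + 2) * (m2 + 2 * N) :=
    Nat.mul_le_mul_left _ h5
  have f3 : (m2 + 3) * m2 ≤ len * m2 := Nat.mul_le_mul_right _ (by omega)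
  nlinarith [f4, f3, h3']

lemma size_add (hm : 0 < m) (hlen : m < len) {j1 j2 : ℕ}
    (h1 : j1 < Ng len m) (h2 : j2 < Ng len m) (hne : j1 ≠ j2) :
    m + 1 ≤ groupSize len m j1 + groupSize len m j2 := by
  have hlen0 : 0 < len := by omega
  unfold groupSize
  by_cases c1 : j1 < tG len m <;> by_cases c2 : j2 < tG len m <;>
    simp only [c1, c2, if_true, if_false]
  · have ht : 1 ≤ tG len m := by omega
    rw [sizeMax_eq hm hlen0 (by omega)]
    have := one_min hm hlen ht
    omega
  · have ht : 1 ≤ tG len m := by omega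
    rw [sizeMax_eq hm hlen0 (by omega)]
    have := one_min hm hlen ht
    omega
  · have ht : 1 ≤ tG len m := by omega
    rw [sizeMax_eq hm hlen0 (by omega)]
    have := one_min hm hlen ht
    omega
  · have ht : tG len m + 2 ≤ Ng len m := by omega
    have := two_min hm hlen ht
    omega

end D3X

namespace D3S
open D3 D3X
variable {len m : ℕ}

lemma Ng_eq0 (hm : 0 < m) (hlen : m ≤ len) (hb : len % m = 0) : Ng len m = len / m := by
  have hml : m * (len / m) = len := Nat.mul_div_cancel' (Nat.dvd_of_mod_eq_zero hb)
  show cdiv len m = _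
  unfold cdiv
  apply Nat.div_eq_of_lt_le
  · have e : len / m * m = m * (len / m) := by ring
    omega
  · have e : (len / m + 1) * m = m * (len / m) + m := by ring
    omega

lemma Ng_eq1 (hm : 0 < m) (hb : len % m ≠ 0) : Ng len m = len / m + 1 := by
  have h := Nat.div_add_mod len m
  have hmod : len % m < m := Nat.mod_lt _ hm
  show cdiv len m = _
  unfold cdiv
  apply Nat.div_eq_of_lt_le
  · have e : (len / m + 1) * m = m * (len / m) + m := by ring
    omega
  · have e : (len / m + 1 + 1) * m = m * (len / m) + 2 * m := by ring
    omega

lemma struct0 (hm : 0 < m) (hlen : m ≤ len) (hb : len % m = 0) :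
    tG len m = 0 ∧ sizeMin len m = m := by
  have hN := Ng_eq0 hm hlen hb
  have ha : 0 < len / m := (Nat.one_le_div_iff hm).mpr hlen
  have hml : m * (len / m) = len := Nat.mul_div_cancel' (Nat.dvd_of_mod_eq_zero hb)
  obtain ⟨a, hae, hml', ha'⟩ : ∃ a, len / m = a ∧ m * a = len ∧ 0 < a :=
    ⟨_, rfl, hml, ha⟩
  have h2 := (Nat.div_mod_unique (a := len) (b := a) (d := m) (c := 0) ha').mpr
    ⟨by have e : a * m = m * a := by ring
        omega, ha'⟩
  unfold tG sizeMin
  rw [hN, hae]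
  exact ⟨h2.2, h2.1⟩

lemma size0 (hm : 0 < m) (hlen : m ≤ len) (hb : len % m = 0) (j : ℕ) :
    groupSize len m j = m := by
  obtain ⟨h1, h2⟩ := struct0 hm hlen hb
  unfold groupSize
  rw [h1, h2]
  simp

lemma structB (hm : 2 ≤ m) (hlen : m ≤ len) (hb : len % m = m - 1) :
    Ng len m = len / m + 1 ∧ tG len m = len / m ∧ sizeMin len m = m - 1 := by
  obtain ⟨m1, rfl⟩ : ∃ m1, m = m1 + 1 := ⟨m - 1, by omega⟩
  have hbm : len % (m1 + 1) = m1 := by omega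
  have hN : Ng len (m1 + 1) = len / (m1 + 1) + 1 := Ng_eq1 (by omega) (by omega)
  have ha0 : 0 < len / (m1 + 1) := (Nat.one_le_div_iff (by omega)).mpr hlen
  obtain ⟨a, b, hae, hbe, h, hblt⟩ :
      ∃ a b, len / (m1 + 1) = a ∧ len % (m1 + 1) = b ∧ (m1 + 1) * a + b = len ∧ b < m1 + 1 :=
    ⟨_, _, rfl, rfl, Nat.div_add_mod _ _, Nat.mod_lt _ (by omega)⟩
  have hb2 : b = m1 := by rw [← hbe]; exact hbm
  have heq : a + (a + 1) * m1 = len := by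
    have e1 : (a + 1) * m1 = a * m1 + m1 := by ring
    have e2 : (m1 + 1) * a = a * m1 + a := by ring
    omega
  have h2 := (Nat.div_mod_unique (a := len) (b := a + 1) (d := m1) (c := a)
      (by omega)).mpr ⟨heq, by omega⟩
  unfold tG sizeMin
  rw [hN, hae]
  exact ⟨rfl, by omega, by omega⟩

lemma structMidHi (hm : 0 < m) (hlen : m ≤ len) (hb1 : 1 ≤ len % m)
    (hb2 : len % m + 2 ≤ m) (hab : m ≤ len / m + len % m) :
    Ng len m = len / m + 1 ∧ tG len m = len / m + len % m + 1 - m ∧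
      sizeMin len m = m - 1 ∧ tG len m + 1 ≤ len / m := by
  obtain ⟨m1, rfl⟩ : ∃ m1, m = m1 + 1 := ⟨m - 1, by omega⟩
  have hN : Ng len (m1 + 1) = len / (m1 + 1) + 1 := Ng_eq1 (by omega) (by omega)
  obtain ⟨a, b, hae, hbe, h, hblt⟩ :
      ∃ a b, len / (m1 + 1) = a ∧ len % (m1 + 1) = b ∧ (m1 + 1) * a + b = len ∧ b < m1 + 1 :=
    ⟨_, _, rfl, rfl, Nat.div_add_mod _ _, Nat.mod_lt _ (by omega)⟩
  simp only [hae, hbe] at hb1 hb2 hab hN ⊢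
  have heq : (a + b - m1) + (a + 1) * m1 = len := by
    have e1 : (a + 1) * m1 = a * m1 + m1 := by ring
    have e2 : (m1 + 1) * a = a * m1 + a := by ring
    omega
  have h2 := (Nat.div_mod_unique (a := len) (b := a + 1) (d := m1) (c := a + b - m1)
      (by omega)).mpr ⟨heq, by omega⟩
  unfold tG sizeMin
  rw [hN]
  exact ⟨rfl, by omega, by omega, by omega⟩

lemma structMidLo (hm : 0 < m) (hlen : m ≤ len) (hb1 : 1 ≤ len % m)
    (hab : len / m + len % m + 1 ≤ m) (j : ℕ) : groupSize len m j + 1 ≤ m := by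
  have hlen0 : 0 < len := by omega
  have hN : Ng len m = len / m + 1 := Ng_eq1 hm (by omega)
  have hk := key len m
  have htlt := tG_lt (len := len) hm hlen0
  have hMx := sizeMax_eq (len := len) (m := m) hm hlen0
  rw [hN] at hk htlt
  unfold groupSize
  obtain ⟨a, b, hae, hbe, h, hblt⟩ :
      ∃ a b, len / m = a ∧ len % m = b ∧ m * a + b = len ∧ b < m :=
    ⟨_, _, rfl, rfl, Nat.div_add_mod _ _, Nat.mod_lt _ hm⟩
  simp only [hae, hbe] at hb1 hab hk htlt
  obtain ⟨Mn, t, hMne, hte⟩ : ∃ Mn t, sizeMin len m = Mn ∧ tG len m = t := ⟨_, _, rfl, rfl⟩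
  simp only [hMne, hte] at hk htlt hMx ⊢
  have claim1 : Mn + 1 ≤ m := by
    by_contra hc
    have f : (a + 1) * m ≤ (a + 1) * Mn := Nat.mul_le_mul_left _ (by omega)
    have e1 : (a + 1) * m = m * a + m := by ring
    have e2 : (a + 1) * Mn = a * Mn + Mn := by ring
    omega
  split
  · rename_i hjt
    rw [hMx (by omega)]
    by_contra hc
    obtain ⟨m1, rfl⟩ : ∃ m1, m = m1 + 1 := ⟨m - 1, by omega⟩
    have f : (a + 1) * m1 ≤ (a + 1) * Mn := Nat.mul_le_mul_left _ (by omega)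
    have e1 : (a + 1) * m1 = a * m1 + m1 := by ring
    have e2 : (a + 1) * Mn = a * Mn + Mn := by ring
    have e3 : (m1 + 1) * a = a * m1 + a := by ring
    omega
  · omega

end D3S

namespace D3G
open D3

def gstart (len m j : ℕ) : ℕ :=
  if j ≤ tG len m then j * sizeMax len m
  else tG len m * sizeMax len m + (j - tG len m) * sizeMin len m

variable {len m : ℕ}

lemma sizeMax_pos (hm : 0 < m) (hlen0 : 0 < len) : 0 < sizeMax len m :=
  cdiv_pos hlen0 (Ng_pos hm hlen0)

lemma lensum (hm : 0 < m) (hlen0 : 0 < len) :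
    tG len m * sizeMax len m + (Ng len m - tG len m) * sizeMin len m = len := by
  have hk := key len m
  have htN := tG_lt (len := len) hm hlen0
  rcases Nat.eq_zero_or_pos (tG len m) with h | h
  · rw [h] at hk ⊢
    simpa using hk
  · rw [sizeMax_eq hm hlen0 (by omega)]
    obtain ⟨u, hu⟩ : ∃ u, Ng len m = tG len m + u :=
      ⟨Ng len m - tG len m, by omega⟩
    rw [hu] at hk ⊢
    simp only [Nat.add_sub_cancel_left]
    obtain ⟨T, U, V, hT, hU, hV⟩ : ∃ T U V, tG len m = T ∧ u = U ∧ sizeMin len m = V :=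
      ⟨_, _, _, rfl, rfl, rfl⟩
    rw [hT, hU, hV] at hk ⊢
    have e1 : T * (V + 1) = T * V + T := by ring
    have e2 : (T + U) * V = T * V + U * V := by ring
    omega

lemma fwd (hm : 0 < m) (hlen0 : 0 < len) {x : ℕ} (hx : x < len) :
    groupOf len m x < Ng len m ∧
    gstart len m (groupOf len m x) ≤ x ∧
    x < gstart len m (groupOf len m x) + groupSize len m (groupOf len m x) := by
  have hMx0 := sizeMax_pos hm hlen0
  have hMn0 := sizeMin_pos hm hlen0
  have htN := tG_lt (len := len) hm hlen0
  have hls := lensum hm hlen0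
  unfold groupOf groupSize gstart
  obtain ⟨N, Mx, Mn, t, hN, hMx, hMn, ht⟩ :
      ∃ N Mx Mn t, Ng len m = N ∧ sizeMax len m = Mx ∧ sizeMin len m = Mn ∧ tG len m = t :=
    ⟨_, _, _, _, rfl, rfl, rfl, rfl⟩
  simp only [hN, hMx, hMn, ht] at hMx0 hMn0 htN hls ⊢
  by_cases hx1 : x < t * Mx
  · simp only [if_pos hx1]
    obtain ⟨q, r, hq, hr, hdm, hmod⟩ :
        ∃ q r, x / Mx = q ∧ x % Mx = r ∧ Mx * q + r = x ∧ r < Mx :=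
      ⟨_, _, rfl, rfl, Nat.div_add_mod _ _, Nat.mod_lt _ hMx0⟩
    rw [hq]
    have hqt : q < t := by
      rw [← hq, Nat.div_lt_iff_lt_mul hMx0]; exact hx1
    rw [if_pos (by omega : q ≤ t), if_pos hqt]
    have e : q * Mx = Mx * q := by ring
    exact ⟨by omega, by omega, by omega⟩
  · simp only [if_neg hx1]
    push_neg at hx1
    obtain ⟨y, hy⟩ : ∃ y, x - t * Mx = y := ⟨_, rfl⟩
    rw [hy]
    have hyx : t * Mx + y = x := by omega
    have hylt : y < (N - t) * Mn := by omega
    obtain ⟨q, r, hq, hr, hdm, hmod⟩ :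
        ∃ q r, y / Mn = q ∧ y % Mn = r ∧ Mn * q + r = y ∧ r < Mn :=
      ⟨_, _, rfl, rfl, Nat.div_add_mod _ _, Nat.mod_lt _ hMn0⟩
    rw [hq]
    have hqlt : q < N - t := by
      rw [← hq, Nat.div_lt_iff_lt_mul hMn0]; exact hylt
    have hgs : (if t + q ≤ t then (t + q) * Mx else t * Mx + (t + q - t) * Mn)
        = t * Mx + q * Mn := by
      rcases Nat.eq_zero_or_pos q with h0 | h0
      · subst h0; rw [if_pos (by omega)]; simp
      · rw [if_neg (by omega), show t + q - t = q from by omega]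
    rw [hgs, if_neg (by omega : ¬ t + q < t)]
    have e : q * Mn = Mn * q := by ring
    exact ⟨by omega, by omega, by omega⟩

lemma bwd (hm : 0 < m) (hlen0 : 0 < len) {x j : ℕ} (hj : j < Ng len m)
    (h1 : gstart len m j ≤ x) (h2 : x < gstart len m j + groupSize len m j) :
    x < len ∧ groupOf len m x = j := by
  have hMx0 := sizeMax_pos hm hlen0
  have hMn0 := sizeMin_pos hm hlen0
  have htN := tG_lt (len := len) hm hlen0
  have hls := lensum hm hlen0
  unfold groupOf groupSize gstart at *
  obtain ⟨N, Mx, Mn, t, hN, hMx, hMn, ht⟩ :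
      ∃ N Mx Mn t, Ng len m = N ∧ sizeMax len m = Mx ∧ sizeMin len m = Mn ∧ tG len m = t :=
    ⟨_, _, _, _, rfl, rfl, rfl, rfl⟩
  simp only [hN, hMx, hMn, ht] at hMx0 hMn0 htN hls hj h1 h2 ⊢
  by_cases hjt : j < t
  · rw [if_pos (by omega : j ≤ t)] at h1 h2
    rw [if_pos hjt] at h2
    have hmul : (j + 1) * Mx ≤ t * Mx := Nat.mul_le_mul_right _ (by omega)
    have e : (j + 1) * Mx = j * Mx + Mx := by ring
    have hx1 : x < t * Mx := by omega
    refine ⟨by omega, ?_⟩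
    rw [if_pos hx1]
    exact Nat.div_eq_of_lt_le h1 (by omega)
  · push_neg at hjt
    obtain ⟨q, rfl⟩ : ∃ q, j = t + q := ⟨j - t, by omega⟩
    have hgs : (if t + q ≤ t then (t + q) * Mx else t * Mx + (t + q - t) * Mn)
        = t * Mx + q * Mn := by
      rcases Nat.eq_zero_or_pos q with h0 | h0
      · subst h0; rw [if_pos (by omega)]; simp
      · rw [if_neg (by omega), show t + q - t = q from by omega]
    rw [hgs] at h1 h2
    rw [if_neg (by omega : ¬ t + q < t)] at h2
    have hqlt : q + 1 ≤ N - t := by omega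
    have hmul : (q + 1) * Mn ≤ (N - t) * Mn := Nat.mul_le_mul_right _ hqlt
    have e1 : (q + 1) * Mn = q * Mn + Mn := by ring
    have hxlen : x < len := by omega
    refine ⟨hxlen, ?_⟩
    rw [if_neg (by omega : ¬ x < t * Mx)]
    have hdiv : (x - t * Mx) / Mn = q := by
      apply Nat.div_eq_of_lt_le
      · omega
      · have e2 : (q + 1) * Mn = q * Mn + Mn := by ring
        omega
    omega

lemma fiber_eq (hm : 0 < m) (hlen0 : 0 < len) {j : ℕ} (hj : j < Ng len m) :
    (Finset.range len).filter (fun x => groupOf len m x = j)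
      = Finset.Ico (gstart len m j) (gstart len m j + groupSize len m j) := by
  ext x
  simp only [Finset.mem_filter, Finset.mem_range, Finset.mem_Ico]
  constructor
  · rintro ⟨hx, rfl⟩
    exact (fwd hm hlen0 hx).2
  · rintro ⟨h1, h2⟩
    obtain ⟨h3, h4⟩ := bwd hm hlen0 hj h1 h2
    exact ⟨h3, h4⟩

lemma card_fiber (hm : 0 < m) (hlen0 : 0 < len) {j : ℕ} (hj : j < Ng len m) :
    ((Finset.range len).filter (fun x => groupOf len m x = j)).card = groupSize len m j := by
  rw [fiber_eq hm hlen0 hj, Nat.card_Ico]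
  omega

lemma card_fiber_fin (hm : 0 < m) (hlen0 : 0 < len) {j : ℕ} (hj : j < Ng len m) :
    (Finset.univ.filter (fun x : Fin len => groupOf len m (x : ℕ) = j)).card
      = groupSize len m j := by
  rw [Finset.card_filter]
  rw [Fin.sum_univ_eq_sum_range (fun i => if groupOf len m i = j then 1 else 0) len]
  rw [← Finset.card_filter]
  exact card_fiber hm hlen0 hj

lemma groupOf_lt_fin (hm : 0 < m) (hlen0 : 0 < len) (x : Fin len) :
    groupOf len m (x : ℕ) < Ng len m :=
  (fwd hm hlen0 x.isLt).1

end D3G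

namespace D3P
open D3 D3X D3S D3G Finset

variable {k m : ℕ}

/-- The cost set of repair choices. -/
def costSet (k m : ℕ) (B : Fin (k+m)) : Set ℕ :=
  {c : ℕ | ∃ (S : Finset (Fin (k+m))) (T : ℕ),
    S.card = k ∧ B ∉ S ∧
    (Finset.univ.filter (fun x : Fin (k+m) => groupOf (k+m) m (x : ℕ) = T ∧ x ≠ B)).card ≤ m - 1 ∧
    c = crossCost (k+m) (fun x => groupOf (k+m) m (x : ℕ)) S T}

lemma repairCost_eq_sInf (B : Fin (k+m)) :
    repairCost (k+m) k m (fun x => groupOf (k+m) m (x : ℕ)) B = sInf (costSet k m B) := rfl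

lemma hlen0 (hk : 1 ≤ k) (hm : 1 ≤ m) : 0 < k + m := by omega
lemma hmlen (hk : 1 ≤ k) (hm : 1 ≤ m) : m < k + m := by omega

lemma Tconstraint (hk : 1 ≤ k) (hm : 1 ≤ m) (B : Fin (k+m)) :
    (Finset.univ.filter (fun x : Fin (k+m) =>
        groupOf (k+m) m (x : ℕ) = groupOf (k+m) m (B : ℕ) ∧ x ≠ B)).card ≤ m - 1 := by
  have hfe : Finset.univ.filter (fun x : Fin (k+m) =>
        groupOf (k+m) m (x : ℕ) = groupOf (k+m) m (B : ℕ) ∧ x ≠ B)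
      = (Finset.univ.filter (fun x : Fin (k+m) =>
        groupOf (k+m) m (x : ℕ) = groupOf (k+m) m (B : ℕ))).erase B := by
    ext x
    simp [Finset.mem_erase, and_comm]
  rw [hfe, Finset.card_erase_of_mem (by simp)]
  have hcard := card_fiber_fin (len := k+m) (m := m) hm (hlen0 hk hm)
    (groupOf_lt_fin hm (hlen0 hk hm) B)
  rw [hcard]
  have := groupSize_le (len := k+m) (m := m) hm (hlen0 hk hm) (groupOf (k+m) m (B : ℕ))
  omega

lemma upper1 (hk : 1 ≤ k) (hm : 1 ≤ m) (B : Fin (k+m)) :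
    ∃ c ∈ costSet k m B, c ≤ Ng (k+m) m - 1 := by
  obtain ⟨S, hSsub, hScard⟩ := Finset.exists_subset_card_eq (s := Finset.univ.erase B) (n := k)
    (by rw [Finset.card_erase_of_mem (Finset.mem_univ B)]; simp; omega)
  have hBS : B ∉ S := fun h => (Finset.mem_erase.mp (hSsub h)).1 rfl
  refine ⟨_, ⟨S, groupOf (k+m) m (B : ℕ), hScard, hBS, Tconstraint hk hm B, rfl⟩, ?_⟩
  unfold crossCost
  have hsub : (S.filter (fun x : Fin (k+m) => groupOf (k+m) m (x : ℕ) ≠ groupOf (k+m) m (B : ℕ))).image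
      (fun x : Fin (k+m) => groupOf (k+m) m (x : ℕ))
      ⊆ (Finset.range (Ng (k+m) m)).erase (groupOf (k+m) m (B : ℕ)) := by
    intro y hy
    obtain ⟨x, hx, rfl⟩ := Finset.mem_image.mp hy
    have hx' := Finset.mem_filter.mp hx
    exact Finset.mem_erase.mpr ⟨hx'.2, Finset.mem_range.mpr (groupOf_lt_fin hm (hlen0 hk hm) x)⟩
  calc _ ≤ ((Finset.range (Ng (k+m) m)).erase (groupOf (k+m) m (B : ℕ))).card :=
        Finset.card_le_card hsub
    _ = Ng (k+m) m - 1 := by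
        rw [Finset.card_erase_of_mem
          (Finset.mem_range.mpr (groupOf_lt_fin hm (hlen0 hk hm) B))]
        simp

lemma costSet_nonempty (hk : 1 ≤ k) (hm : 1 ≤ m) (B : Fin (k+m)) :
    (costSet k m B).Nonempty := by
  obtain ⟨c, hc, _⟩ := upper1 hk hm B
  exact ⟨c, hc⟩

def fib (k m j : ℕ) : Finset (Fin (k+m)) :=
  Finset.univ.filter (fun x : Fin (k+m) => groupOf (k+m) m (x : ℕ) = j)

lemma card_fib (hk : 1 ≤ k) (hm : 1 ≤ m) {j : ℕ} (hj : j < Ng (k+m) m) :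
    (fib k m j).card = groupSize (k+m) m j :=
  card_fiber_fin hm (hlen0 hk hm) hj

lemma Ng_two (hk : 1 ≤ k) (hm : 1 ≤ m) : 2 ≤ Ng (k+m) m := by
  have h := Ng_mul_ge (len := k+m) (m := m) hm
  by_contra hc
  push_neg at hc
  have h0 : Ng (k+m) m = 0 ∨ Ng (k+m) m = 1 := by omega
  rcases h0 with h0 | h0 <;> rw [h0] at h <;> simp at h <;> omega

lemma upper2 (hk : 1 ≤ k) (hm : 1 ≤ m) (B : Fin (k+m)) {j1 : ℕ}
    (hj1 : j1 < Ng (k+m) m) (hne : j1 ≠ groupOf (k+m) m (B : ℕ))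
    (hs : groupSize (k+m) m j1 + 1 ≤ m) :
    ∃ c ∈ costSet k m B, c ≤ Ng (k+m) m - 2 := by
  have hj0 : groupOf (k+m) m (B : ℕ) < Ng (k+m) m := groupOf_lt_fin hm (hlen0 hk hm) B
  have hP4 : m + 1 ≤ groupSize (k+m) m (groupOf (k+m) m (B : ℕ)) + groupSize (k+m) m j1 :=
    size_add hm (hmlen hk hm) hj0 hj1 (fun h => hne h.symm)
  have hBfib0 : B ∈ fib k m (groupOf (k+m) m (B : ℕ)) := by simp [fib]
  have hcard0 : (fib k m (groupOf (k+m) m (B : ℕ))).card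
      = groupSize (k+m) m (groupOf (k+m) m (B : ℕ)) := card_fib hk hm hj0
  have hcard1 : (fib k m j1).card = groupSize (k+m) m j1 := card_fib hk hm hj1
  obtain ⟨E, hEsub, hEcard⟩ := Finset.exists_subset_card_eq
    (s := (fib k m (groupOf (k+m) m (B : ℕ))).erase B) (n := m - 1 - groupSize (k+m) m j1)
    (by rw [Finset.card_erase_of_mem hBfib0, hcard0]; omega)
  have hBfib1 : B ∉ fib k m j1 := by
    intro h
    exact hne ((Finset.mem_filter.mp h).2.symm ▸ rfl)
  have hBE : B ∉ E := fun h => (Finset.mem_erase.mp (hEsub h)).1 rfl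
  have hdisj : Disjoint (fib k m j1) E := by
    rw [Finset.disjoint_left]
    intro x hx1 hxE
    have h1 : groupOf (k+m) m (x : ℕ) = j1 := (Finset.mem_filter.mp hx1).2
    have h2 : groupOf (k+m) m (x : ℕ) = groupOf (k+m) m (B : ℕ) :=
      (Finset.mem_filter.mp (Finset.mem_of_mem_erase (hEsub hxE))).2
    exact hne (h1 ▸ h2)
  have hBunion : B ∉ fib k m j1 ∪ E := by
    rw [Finset.mem_union]; tauto
  have hexcl_card : (insert B (fib k m j1 ∪ E)).card = m := by
    rw [Finset.card_insert_of_notMem hBunion, Finset.card_union_of_disjoint hdisj,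
      hcard1, hEcard]
    omega
  set S := Finset.univ \ insert B (fib k m j1 ∪ E) with hSdef
  have hScard : S.card = k := by
    rw [hSdef, Finset.card_sdiff_of_subset (Finset.subset_univ _), hexcl_card]
    simp
  have hBS : B ∉ S := by
    rw [hSdef]
    simp
  refine ⟨_, ⟨S, groupOf (k+m) m (B : ℕ), hScard, hBS, Tconstraint hk hm B, rfl⟩, ?_⟩
  unfold crossCost
  have hsub : (S.filter (fun x : Fin (k+m) =>
      groupOf (k+m) m (x : ℕ) ≠ groupOf (k+m) m (B : ℕ))).image
      (fun x : Fin (k+m) => groupOf (k+m) m (x : ℕ))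
      ⊆ ((Finset.range (Ng (k+m) m)).erase (groupOf (k+m) m (B : ℕ))).erase j1 := by
    intro y hy
    obtain ⟨x, hx, rfl⟩ := Finset.mem_image.mp hy
    obtain ⟨hxS, hxne⟩ := Finset.mem_filter.mp hx
    have hxnotin : x ∉ insert B (fib k m j1 ∪ E) := (Finset.mem_sdiff.mp hxS).2
    have hxne1 : groupOf (k+m) m (x : ℕ) ≠ j1 := by
      intro h
      exact hxnotin (Finset.mem_insert_of_mem (Finset.mem_union_left _ (by
        simp [fib, h])))
    exact Finset.mem_erase.mpr ⟨hxne1, Finset.mem_erase.mpr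
      ⟨hxne, Finset.mem_range.mpr (groupOf_lt_fin hm (hlen0 hk hm) x)⟩⟩
  calc _ ≤ (((Finset.range (Ng (k+m) m)).erase (groupOf (k+m) m (B : ℕ))).erase j1).card :=
        Finset.card_le_card hsub
    _ ≤ Ng (k+m) m - 2 := by
        rw [Finset.card_erase_of_mem (Finset.mem_erase.mpr ⟨hne, Finset.mem_range.mpr hj1⟩),
          Finset.card_erase_of_mem (Finset.mem_range.mpr hj0), Finset.card_range]
        omega

lemma lower_core (hk : 1 ≤ k) (hm : 1 ≤ m) (S : Finset (Fin (k+m))) (T : ℕ) :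
    ((Finset.range (Ng (k+m) m)).filter
        (fun j => j ≠ T ∧ ∃ x ∈ S, groupOf (k+m) m (x : ℕ) = j)).card
      ≤ crossCost (k+m) (fun x => groupOf (k+m) m (x : ℕ)) S T := by
  unfold crossCost
  apply Finset.card_le_card
  intro j hj
  have h := Finset.mem_filter.mp hj
  obtain ⟨x, hxS, hPx⟩ := h.2.2
  exact Finset.mem_image.mpr
    ⟨x, Finset.mem_filter.mpr ⟨hxS, fun hTeq => h.2.1 (hPx.symm.trans hTeq)⟩, hPx⟩

lemma Dset_card (hk : 1 ≤ k) (hm : 1 ≤ m) (S : Finset (Fin (k+m))) (hScard : S.card = k) :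
    ((Finset.range (Ng (k+m) m)).filter
        (fun j => ¬ ∃ x ∈ S, groupOf (k+m) m (x : ℕ) = j)).card ≤ 1 := by
  rw [Finset.card_le_one]
  intro j1 hj1 j2 hj2
  by_contra hne
  obtain ⟨hj1r, hj1n⟩ := Finset.mem_filter.mp hj1
  obtain ⟨hj2r, hj2n⟩ := Finset.mem_filter.mp hj2
  have hdisj : Disjoint (fib k m j1) (fib k m j2) := by
    rw [Finset.disjoint_left]
    intro x hx1 hx2
    exact hne ((Finset.mem_filter.mp hx1).2.symm.trans (Finset.mem_filter.mp hx2).2)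
  have hsub : fib k m j1 ∪ fib k m j2 ⊆ Finset.univ \ S := by
    intro x hx
    rw [Finset.mem_sdiff]
    refine ⟨Finset.mem_univ x, fun hxS => ?_⟩
    rcases Finset.mem_union.mp hx with h | h
    · exact hj1n ⟨x, hxS, (Finset.mem_filter.mp h).2⟩
    · exact hj2n ⟨x, hxS, (Finset.mem_filter.mp h).2⟩
  have hcard_sdiff : (Finset.univ \ S).card = m := by
    rw [Finset.card_sdiff_of_subset (Finset.subset_univ _), hScard]
    simp
  have hP4 : m + 1 ≤ groupSize (k+m) m j1 + groupSize (k+m) m j2 :=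
    size_add hm (hmlen hk hm) (Finset.mem_range.mp hj1r) (Finset.mem_range.mp hj2r) hne
  have h1 := Finset.card_le_card hsub
  rw [Finset.card_union_of_disjoint hdisj, hcard_sdiff,
    card_fib hk hm (Finset.mem_range.mp hj1r), card_fib hk hm (Finset.mem_range.mp hj2r)] at h1
  omega

lemma lower_gen (hk : 1 ≤ k) (hm : 1 ≤ m) (B : Fin (k+m)) :
    ∀ c ∈ costSet k m B, Ng (k+m) m - 2 ≤ c := by
  rintro c ⟨S, T, hScard, hBS, hT, rfl⟩
  have hcore := lower_core hk hm (m := m) S T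
  have hsplit := Finset.card_filter_add_card_filter_not
    (s := Finset.range (Ng (k+m) m))
    (fun j => j ≠ T ∧ ∃ x ∈ S, groupOf (k+m) m (x : ℕ) = j)
  have hnegsub : (Finset.range (Ng (k+m) m)).filter
      (fun j => ¬ (j ≠ T ∧ ∃ x ∈ S, groupOf (k+m) m (x : ℕ) = j))
      ⊆ insert T ((Finset.range (Ng (k+m) m)).filter
        (fun j => ¬ ∃ x ∈ S, groupOf (k+m) m (x : ℕ) = j)) := by
    intro j hj
    obtain ⟨hjr, hjn⟩ := Finset.mem_filter.mp hj
    by_cases hjT : j = T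
    · exact Finset.mem_insert.mpr (Or.inl hjT)
    · refine Finset.mem_insert.mpr (Or.inr (Finset.mem_filter.mpr ⟨hjr, ?_⟩))
      exact fun hex => hjn ⟨hjT, hex⟩
  have hneg := Finset.card_le_card hnegsub
  have hins := Finset.card_insert_le T ((Finset.range (Ng (k+m) m)).filter
        (fun j => ¬ ∃ x ∈ S, groupOf (k+m) m (x : ℕ) = j))
  have hD := Dset_card hk hm S hScard
  have hcardrange : (Finset.range (Ng (k+m) m)).card = Ng (k+m) m := Finset.card_range _
  omega

lemma lower_strong (hk : 1 ≤ k) (hm : 1 ≤ m) (B : Fin (k+m))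
    (H : ∀ j < Ng (k+m) m, j ≠ groupOf (k+m) m (B : ℕ) → groupSize (k+m) m j = m) :
    ∀ c ∈ costSet k m B, Ng (k+m) m - 1 ≤ c := by
  rintro c ⟨S, T, hScard, hBS, hT, rfl⟩
  have hcore := lower_core hk hm (m := m) S T
  have hsub : (Finset.range (Ng (k+m) m)).erase (groupOf (k+m) m (B : ℕ))
      ⊆ (Finset.range (Ng (k+m) m)).filter
        (fun j => j ≠ T ∧ ∃ x ∈ S, groupOf (k+m) m (x : ℕ) = j) := by
    intro j hj
    obtain ⟨hjne, hjr⟩ := Finset.mem_erase.mp hj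
    have hjN := Finset.mem_range.mp hjr
    refine Finset.mem_filter.mpr ⟨hjr, ?_, ?_⟩
    · -- j ≠ T
      intro heq
      subst heq
      have hfe : Finset.univ.filter (fun x : Fin (k+m) =>
          groupOf (k+m) m (x : ℕ) = j ∧ x ≠ B) = fib k m j := by
        ext x
        simp only [fib, Finset.mem_filter, Finset.mem_univ, true_and]
        constructor
        · exact fun h => h.1
        · intro h
          refine ⟨h, fun hxB => ?_⟩
          subst hxB
          exact hjne h.symm
      rw [hfe, card_fib hk hm hjN, H j hjN hjne] at hT
      omega
    · -- ∃ x ∈ S with group j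
      by_contra hno
      push_neg at hno
      have hBfib : B ∉ fib k m j := by
        intro h
        exact hjne (Finset.mem_filter.mp h).2.symm
      have hsub2 : insert B (fib k m j) ⊆ Finset.univ \ S := by
        intro x hx
        rw [Finset.mem_sdiff]
        refine ⟨Finset.mem_univ x, fun hxS => ?_⟩
        rcases Finset.mem_insert.mp hx with h | h
        · subst h; exact hBS hxS
        · exact hno x hxS (Finset.mem_filter.mp h).2
      have hcard2 := Finset.card_le_card hsub2
      have huniv : (Finset.univ : Finset (Fin (k+m))).card = k + m := by simp
      rw [Finset.card_insert_of_notMem hBfib, card_fib hk hm hjN, H j hjN hjne,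
        Finset.card_sdiff_of_subset (Finset.subset_univ _), hScard, huniv] at hcard2
      omega
  have h1 := Finset.card_le_card hsub
  rw [Finset.card_erase_of_mem (Finset.mem_range.mpr
    (groupOf_lt_fin hm (hlen0 hk hm) B)), Finset.card_range] at h1
  omega

end D3P

namespace D3F
open D3 D3X D3S D3G D3P Finset

variable {k m : ℕ}

lemma cost_eq_strong (hk : 1 ≤ k) (hm : 1 ≤ m) (B : Fin (k+m))
    (H : ∀ j < Ng (k+m) m, j ≠ groupOf (k+m) m (B : ℕ) → groupSize (k+m) m j = m) :
    repairCost (k+m) k m (fun x => groupOf (k+m) m (x : ℕ)) B = Ng (k+m) m - 1 := by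
  rw [repairCost_eq_sInf]
  apply le_antisymm
  · obtain ⟨c, hc, hle⟩ := upper1 hk hm B
    exact le_trans (Nat.sInf_le hc) hle
  · exact le_csInf (costSet_nonempty hk hm B) (lower_strong hk hm B H)

lemma cost_eq_weak (hk : 1 ≤ k) (hm : 1 ≤ m) (B : Fin (k+m)) {j1 : ℕ}
    (hj1 : j1 < Ng (k+m) m) (hne : j1 ≠ groupOf (k+m) m (B : ℕ))
    (hs : groupSize (k+m) m j1 + 1 ≤ m) :
    repairCost (k+m) k m (fun x => groupOf (k+m) m (x : ℕ)) B = Ng (k+m) m - 2 := by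
  rw [repairCost_eq_sInf]
  apply le_antisymm
  · obtain ⟨c, hc, hle⟩ := upper2 hk hm B hj1 hne hs
    exact le_trans (Nat.sInf_le hc) hle
  · exact le_csInf (costSet_nonempty hk hm B) (lower_gen hk hm B)

end D3F

theorem d3_repair_cost' (k m : ℕ) (hk : 1 ≤ k) (hm : 1 ≤ m) :
    (∑ B : Fin (k + m),
        repairCost (k + m) k m (fun x => groupOf (k + m) m (x : ℕ)) B)
      = if (k + m) % m = m - 1 then
          ((k + m) / m - 1) * (k + 1) + (k + m) / m * (m - 1)
        else ((k + m) / m - 1) * (k + m) := by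
  classical
  have hm0 : 0 < m := hm
  have hlen0 : 0 < k + m := by omega
  have hmlen : m ≤ k + m := by omega
  have hmlt : m < k + m := by omega
  have ha1 : 1 ≤ (k+m)/m := (Nat.one_le_div_iff hm0).mpr hmlen
  rcases Nat.eq_zero_or_pos ((k+m) % m) with hb0 | hb1
  · -- b = 0
    have hNa : Ng (k+m) m = (k+m)/m := D3S.Ng_eq0 hm0 hmlen hb0
    have hcost : ∀ B : Fin (k+m),
        repairCost (k+m) k m (fun x => groupOf (k+m) m (x : ℕ)) B = Ng (k+m) m - 1 :=
      fun B => D3F.cost_eq_strong hk hm B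
        (fun j _ _ => D3S.size0 hm0 hmlen hb0 j)
    rw [Finset.sum_congr rfl (fun B _ => hcost B), Finset.sum_const, Finset.card_univ,
      Fintype.card_fin, smul_eq_mul]
    by_cases hm1 : m = 1
    · subst hm1
      rw [if_pos (by omega)]
      simp only [Nat.div_one] at hNa ⊢
      rw [hNa]
      simp only [Nat.add_sub_cancel]
      ring
    · rw [if_neg (by omega)]
      rw [hNa, Nat.mul_comm]
  · -- b ≥ 1
    have hm2 : 2 ≤ m := by
      have := Nat.mod_lt (k+m) hm0
      omega
    by_cases hbm : (k+m) % m = m - 1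
    · -- b = m - 1
      obtain ⟨hNb, htb, hMnb⟩ := D3S.structB hm2 hmlen hbm
      rw [if_pos hbm]
      have hsz_small : groupSize (k+m) m ((k+m)/m) = m - 1 := by
        unfold groupSize
        rw [htb, if_neg (lt_irrefl _), hMnb]
      have hsz_big : ∀ j < Ng (k+m) m, j ≠ (k+m)/m → groupSize (k+m) m j = m := by
        intro j hj hne
        have hjt : j < tG (k+m) m := by rw [htb]; rw [hNb] at hj; omega
        unfold groupSize
        rw [if_pos hjt, D3.sizeMax_eq hm0 hlen0 (by rw [htb]; omega), hMnb]
        omega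
      have hcost : ∀ B : Fin (k+m),
          repairCost (k+m) k m (fun x => groupOf (k+m) m (x : ℕ)) B
            = ((k+m)/m - 1) + (if groupOf (k+m) m (B : ℕ) = (k+m)/m then 1 else 0) := by
        intro B
        by_cases hgB : groupOf (k+m) m (B : ℕ) = (k+m)/m
        · rw [D3F.cost_eq_strong hk hm B
            (fun j hj hne => hsz_big j hj (by rw [← hgB]; exact hne)), if_pos hgB, hNb]
          omega
        · rw [D3F.cost_eq_weak hk hm B (j1 := (k+m)/m) (by rw [hNb]; omega)
            (fun h => hgB h.symm) (by rw [hsz_small]; omega), if_neg hgB, hNb]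
          omega
      rw [Finset.sum_congr rfl (fun B _ => hcost B), Finset.sum_add_distrib,
        Finset.sum_const, Finset.card_univ, Fintype.card_fin, smul_eq_mul]
      have hsum2 : (∑ B : Fin (k+m), if groupOf (k+m) m (B : ℕ) = (k+m)/m then 1 else 0)
          = m - 1 := by
        rw [← Finset.card_filter]
        rw [D3G.card_fiber_fin hm0 hlen0 (by rw [hNb]; omega)]
        exact hsz_small
      rw [hsum2]
      obtain ⟨a1, hA⟩ : ∃ a1, (k+m)/m = a1 + 1 := ⟨(k+m)/m - 1, by omega⟩
      obtain ⟨m1, rfl⟩ : ∃ m1, m = m1 + 2 := ⟨m - 2, by omega⟩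
      rw [hA]
      simp only [show ∀ x : ℕ, x + 1 - 1 = x from fun x => rfl,
        show m1 + 2 - 1 = m1 + 1 from rfl]
      ring
    · -- 1 ≤ b ≤ m - 2
      rw [if_neg hbm]
      have hbmod : (k+m) % m < m := Nat.mod_lt _ hm0
      have hNb : Ng (k+m) m = (k+m)/m + 1 := D3S.Ng_eq1 hm0 (by omega)
      have hsmall : ∀ B : Fin (k+m), ∃ j1 < Ng (k+m) m,
          j1 ≠ groupOf (k+m) m (B : ℕ) ∧ groupSize (k+m) m j1 + 1 ≤ m := by
        intro B
        by_cases hab : m ≤ (k+m)/m + (k+m)%m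
        · obtain ⟨_, htb, hMnb, hta⟩ := D3S.structMidHi hm0 hmlen hb1 (by omega) hab
          have hg : ∀ j, tG (k+m) m ≤ j → groupSize (k+m) m j = m - 1 := by
            intro j hj
            unfold groupSize
            rw [if_neg (by omega), hMnb]
          by_cases hB : groupOf (k+m) m (B : ℕ) = tG (k+m) m
          · exact ⟨(k+m)/m, by rw [hNb]; omega, by rw [hB]; omega,
              by rw [hg _ (by omega)]; omega⟩
          · exact ⟨tG (k+m) m, by rw [hNb]; omega, fun h => hB h.symm,
              by rw [hg _ (le_refl _)]; omega⟩
        · have hg := D3S.structMidLo hm0 hmlen hb1 (by omega)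
          by_cases hB : groupOf (k+m) m (B : ℕ) = 0
          · exact ⟨1, by rw [hNb]; omega, by rw [hB]; omega, hg 1⟩
          · exact ⟨0, by rw [hNb]; omega, fun h => hB h.symm, hg 0⟩
      have hcost : ∀ B : Fin (k+m),
          repairCost (k+m) k m (fun x => groupOf (k+m) m (x : ℕ)) B = (k+m)/m - 1 := by
        intro B
        obtain ⟨j1, hj1, hne, hs⟩ := hsmall B
        rw [D3F.cost_eq_weak hk hm B hj1 hne hs, hNb]
        omega
      rw [Finset.sum_congr rfl (fun B _ => hcost B), Finset.sum_const, Finset.card_univ,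
        Fintype.card_fin, smul_eq_mul, Nat.mul_comm]

/-- Lemma 4 (exact cost of the D³ layout): under the D³ grouping of a stripe of
`len = k + m` blocks (each group being one rack), with `a = ⌊len/m⌋` and
`b = len mod m`, the total repair cost over all blocks equals
`(a-1)(k+1) + a(m-1)` if `b = m - 1`, and `(a-1)(k+m)` otherwise; equivalently
the average number of cross-rack accessed blocks for recovering one failed block
is `μ = ((a-1)(k+1) + a(m-1))/(k+m)` if `b = m - 1` and `μ = a - 1` otherwise. -/
theorem d3_repair_cost (k m : ℕ) (hk : 1 ≤ k) (hm : 1 ≤ m) :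
    (∑ B : Fin (k + m),
        repairCost (k + m) k m (fun x => groupOf (k + m) m (x : ℕ)) B)
      = if (k + m) % m = m - 1 then
          ((k + m) / m - 1) * (k + 1) + (k + m) / m * (m - 1)
        else ((k + m) / m - 1) * (k + m) :=
  d3_repair_cost' k m hk hm
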